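/- arXiv:1912.13287 — 5 statements merged into one kernel-verified Lean document; each statement's English description precedes it below -/
import Mathlib

section
/- Let D = (d_1,...,d_n) be a sequence of nonnegative integers and let α ≠ β be indices with d_α > d_β. Let D* be the sequence obtained from D by decrementing d_α by 1 and incrementing d_β by 1 (a levelling operation). If D* is not a permutation of D (equivalently, d_α ≥ d_β + 2), then the spread φ(D*) ≤ φ(D) − 2, where φ(D) = Σ_{1≤r<s≤n} |d_r − d_s|. -/
open Finset

/-- A sequence is graphic if it is the degree sequence of a simple graph. -/
def IsGraphic {n : ℕ} (D : Fin n → ℕ) : Prop :=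
  ∃ (G : SimpleGraph (Fin n)) (_ : DecidableRel G.Adj), ∀ i, G.degree i = D i

/-- The levelling operation: decrement entry `α` by 1, increment entry `β` by 1. -/
def lvl {n : ℕ} (D : Fin n → ℕ) (α β : Fin n) : Fin n → ℕ :=
  fun i => if i = α then D α - 1 else if i = β then D β + 1 else D i

/-- The spread `φ(D) = ∑_{r<s} |d_r - d_s|`. -/
def spread {n : ℕ} (D : Fin n → ℕ) : ℤ :=
  ∑ r : Fin n, ∑ s : Fin n, if r < s then |(D r : ℤ) - (D s : ℤ)| else 0

/-- `A ≤ D ≤ B` coordinatewise. -/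
def Between {n : ℕ} (A D B : Fin n → ℕ) : Prop := ∀ i, A i ≤ D i ∧ D i ≤ B i

/-- Volume of `D` w.r.t. lower boundary `A`. -/
def vol {n : ℕ} (A D : Fin n → ℕ) : ℕ := ∑ i, (D i - A i)

/-- An interval sequence `(A,B)` is realizable if it contains a graphic sequence. -/
def Realizable {n : ℕ} (A B : Fin n → ℕ) : Prop := ∃ D, IsGraphic D ∧ Between A D B

/-- Two sequences are similar if one is a permutation of the other. -/
def SimilarSeq {n : ℕ} (D D' : Fin n → ℕ) : Prop :=
  ∃ σ : Equiv.Perm (Fin n), ∀ i, D' i = D (σ i)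

/-- `D` is levelled w.r.t. `(A,B)`: it lies in `[A,B]` and no levelling operation staying
within `[A,B]` strictly decreases its spread. -/
def IsLevelled {n : ℕ} (A B D : Fin n → ℕ) : Prop :=
  Between A D B ∧ ∀ α β : Fin n, α ≠ β → D β < D α → Between A (lvl D α β) B →
    spread D ≤ spread (lvl D α β)

/-- One levelling step from `D` to `D'` staying within `[A,B]`. -/
def LvlStep {n : ℕ} (A B D D' : Fin n → ℕ) : Prop :=
  ∃ α β : Fin n, α ≠ β ∧ D β < D α ∧ D' = lvl D α β ∧ Between A D' B

/-- `F(ℓ,S) = ∑_i (min(ℓ,b_i) - min(ℓ,a_i))`. -/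
noncomputable def Fvol {n : ℕ} (A B : Fin n → ℕ) (ℓ : ℝ) : ℝ :=
  ∑ i, (min ℓ (B i : ℝ) - min ℓ (A i : ℝ))

/-- Upper deviation `δ_U(D,S) = ∑_i max(0, d_i - b_i)` (truncated subtraction). -/
def devU {n : ℕ} (D B : Fin n → ℕ) : ℕ := ∑ i, (D i - B i)

/-- Lower deviation `δ_L(D,S) = ∑_i max(0, a_i - d_i)` (truncated subtraction). -/
def devL {n : ℕ} (D A : Fin n → ℕ) : ℕ := ∑ i, (A i - D i)

/-- `R` lies in `[B,⊤]`, `(A,R)` is realizable, and `∑ (r_i - b_i)` is minimum. -/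
def MinUpper {n : ℕ} (A B R : Fin n → ℕ) : Prop :=
  (∀ i, B i ≤ R i ∧ R i ≤ n - 1) ∧ Realizable A R ∧
  ∀ R' : Fin n → ℕ, (∀ i, B i ≤ R' i ∧ R' i ≤ n - 1) → Realizable A R' →
    ∑ i, (R i - B i) ≤ ∑ i, (R' i - B i)

lemma two_spread {n : ℕ} (D : Fin n → ℕ) :
    2 * spread D = ∑ r : Fin n, ∑ s : Fin n, |(D r : ℤ) - (D s : ℤ)| := by
  have key : ∀ r s : Fin n, |(D r : ℤ) - (D s : ℤ)| =
      (if r < s then |(D r : ℤ) - (D s : ℤ)| else 0) +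
      (if s < r then |(D r : ℤ) - (D s : ℤ)| else 0) := by
    intro r s
    rcases lt_trichotomy r s with h | h | h
    · simp [h, asymm h]
    · subst h; simp
    · simp [h, asymm h]
  calc 2 * spread D = spread D + spread D := two_mul _
    _ = ∑ r : Fin n, ∑ s : Fin n,
        ((if r < s then |(D r : ℤ) - (D s : ℤ)| else 0) +
         (if s < r then |(D r : ℤ) - (D s : ℤ)| else 0)) := by
        rw [show (∑ r : Fin n, ∑ s : Fin n,
            ((if r < s then |(D r : ℤ) - (D s : ℤ)| else 0) +
             (if s < r then |(D r : ℤ) - (D s : ℤ)| else 0))) =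
            (∑ r : Fin n, ∑ s : Fin n, (if r < s then |(D r : ℤ) - (D s : ℤ)| else 0)) +
            (∑ r : Fin n, ∑ s : Fin n, (if s < r then |(D r : ℤ) - (D s : ℤ)| else 0))
          from by simp [Finset.sum_add_distrib]]
        congr 1
        rw [Finset.sum_comm]
        unfold spread
        refine Finset.sum_congr rfl fun r _ => Finset.sum_congr rfl fun s _ => ?_
        split_ifs with hh
        · exact (abs_sub_comm _ _)
        · rfl
    _ = ∑ r : Fin n, ∑ s : Fin n, |(D r : ℤ) - (D s : ℤ)| := by
        refine Finset.sum_congr rfl fun r _ => Finset.sum_congr rfl fun s _ => (key r s).symm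

theorem stmt_0 {n : ℕ} (D : Fin n → ℕ) (α β : Fin n) (hne : α ≠ β)
    (h : D β + 2 ≤ D α) :
    spread (lvl D α β) ≤ spread D - 2 := by
  set D' := lvl D α β with hD'
  have hDα : (D' α : ℤ) = (D α : ℤ) - 1 := by
    simp only [hD', lvl, if_pos rfl]
    have : 1 ≤ D α := by omega
    push_cast [Nat.cast_sub this]; ring
  have hDβ : (D' β : ℤ) = (D β : ℤ) + 1 := by
    simp [hD', lvl, hne.symm]
  have hDo : ∀ s : Fin n, s ≠ α → s ≠ β → (D' s : ℤ) = (D s : ℤ) := by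
    intro s h1 h2; simp [hD', lvl, h1, h2]
  have hab : (D β : ℤ) + 2 ≤ (D α : ℤ) := by exact_mod_cast h
  set W : Fin n → ℤ := fun r => ∑ s : Fin n,
      (|(D r : ℤ) - (D s : ℤ)| - |(D' r : ℤ) - (D' s : ℤ)|) with hW
  -- rows other than α, β
  have hWrow : ∀ r : Fin n, r ≠ α → r ≠ β → 0 ≤ W r := by
    intro r h1 h2
    have heq : W r = (|(D r : ℤ) - (D α : ℤ)| - |(D' r : ℤ) - (D' α : ℤ)|) +
        (|(D r : ℤ) - (D β : ℤ)| - |(D' r : ℤ) - (D' β : ℤ)|) := by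
      refine Finset.sum_eq_add_of_mem α β (Finset.mem_univ α) (Finset.mem_univ β) hne ?_
      intro c _ hc
      rw [hDo r h1 h2, hDo c hc.1 hc.2]; ring
    rw [heq, hDo r h1 h2, hDα, hDβ]
    simp only [Int.abs_eq_natAbs]
    omega
  -- combined rows α and β
  have hWαβ : 4 ≤ W α + W β := by
    have heq : W α + W β = ∑ s : Fin n,
        ((|(D α : ℤ) - (D s : ℤ)| - |(D' α : ℤ) - (D' s : ℤ)|) +
         (|(D β : ℤ) - (D s : ℤ)| - |(D' β : ℤ) - (D' s : ℤ)|)) := by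
      rw [hW]; rw [← Finset.sum_add_distrib]
    set G : Fin n → ℤ := fun s =>
        ((|(D α : ℤ) - (D s : ℤ)| - |(D' α : ℤ) - (D' s : ℤ)|) +
         (|(D β : ℤ) - (D s : ℤ)| - |(D' β : ℤ) - (D' s : ℤ)|)) with hG
    have hGnn : ∀ s : Fin n, 0 ≤ G s := by
      intro s
      by_cases h1 : s = α
      · subst h1
        simp only [hG, hDα, hDβ, Int.abs_eq_natAbs]; omega
      by_cases h2 : s = β
      · subst h2
        simp only [hG, hDα, hDβ, Int.abs_eq_natAbs]; omega
      · simp only [hG, hDα, hDβ, hDo s h1 h2, Int.abs_eq_natAbs]; omega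
    have hGα : 2 ≤ G α := by
      simp only [hG, hDα, hDβ, Int.abs_eq_natAbs]; omega
    have hGβ : 2 ≤ G β := by
      simp only [hG, hDα, hDβ, Int.abs_eq_natAbs]; omega
    have hsub : ∑ s ∈ ({α, β} : Finset (Fin n)), G s ≤ ∑ s : Fin n, G s :=
      Finset.sum_le_sum_of_subset_of_nonneg (Finset.subset_univ _)
        (fun i _ _ => hGnn i)
    rw [Finset.sum_pair hne] at hsub
    rw [heq]
    calc (4 : ℤ) ≤ G α + G β := by linarith
      _ ≤ _ := hsub
  -- total
  have htot : 4 ≤ ∑ r : Fin n, W r := by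
    have hβmem : β ∈ (Finset.univ : Finset (Fin n)).erase α :=
      Finset.mem_erase.mpr ⟨hne.symm, Finset.mem_univ β⟩
    rw [← Finset.add_sum_erase _ W (Finset.mem_univ α),
        ← Finset.add_sum_erase _ W hβmem]
    have htail : 0 ≤ ∑ r ∈ ((Finset.univ.erase α).erase β), W r := by
      refine Finset.sum_nonneg fun r hr => ?_
      have hr' := Finset.mem_erase.mp hr
      have hr'' := Finset.mem_erase.mp hr'.2
      exact hWrow r hr''.1 hr'.1
    linarith
  have hT : 2 * spread D - 2 * spread D' = ∑ r : Fin n, W r := by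
    rw [two_spread, two_spread, ← Finset.sum_sub_distrib]
    refine Finset.sum_congr rfl fun r _ => ?_
    rw [hW, ← Finset.sum_sub_distrib]
  linarith
end

section
/- Let D = (d_1,...,d_n) be a graphic sequence (i.e., realized as the degree sequence of some simple undirected graph on n vertices), and let α ≠ β satisfy d_α > d_β. Then the sequence π(D,α,β) obtained by decrementing d_α by 1 and incrementing d_β by 1 is also graphic. -/
open Finset

theorem stmt_1 {n : ℕ} (D : Fin n → ℕ) (hD : IsGraphic D) (α β : Fin n)
    (hne : α ≠ β) (h : D β < D α) :
    IsGraphic (lvl D α β) := by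
  classical
  obtain ⟨G, hdec, hdeg⟩ := hD
  have hcard : ((G.neighborFinset β).erase α).card < ((G.neighborFinset α).erase β).card := by
    by_cases hadj : G.Adj α β
    · rw [Finset.card_erase_of_mem (by simpa using hadj.symm),
        Finset.card_erase_of_mem (by simpa using hadj)]
      have h1 : 1 ≤ G.degree β := by
        rw [← SimpleGraph.card_neighborFinset_eq_degree]
        exact Finset.card_pos.2 ⟨α, by simpa using hadj.symm⟩
      simp only [SimpleGraph.card_neighborFinset_eq_degree, hdeg] at *
      omega
    · rw [Finset.erase_eq_of_notMem (by simpa using fun h' : G.Adj β α => hadj h'.symm),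
        Finset.erase_eq_of_notMem (by simpa using hadj)]
      simpa [SimpleGraph.card_neighborFinset_eq_degree, hdeg] using h
  have hsub : ¬ (G.neighborFinset α).erase β ⊆ (G.neighborFinset β).erase α :=
    fun hs => (Finset.card_le_card hs).not_gt hcard
  obtain ⟨v, hv1, hv2⟩ := Finset.not_subset.1 hsub
  rw [Finset.mem_erase, SimpleGraph.mem_neighborFinset] at hv1
  obtain ⟨hvβ, hαv⟩ := hv1
  have hvα : v ≠ α := fun e => G.loopless.irrefl α (e ▸ hαv)
  have hβv : ¬ G.Adj β v := by
    intro hb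
    exact hv2 (Finset.mem_erase.2 ⟨hvα, (SimpleGraph.mem_neighborFinset ..).2 hb⟩)
  have hβv' : β ≠ v := fun e => hvβ e.symm
  let G' : SimpleGraph (Fin n) :=
    { Adj := fun x y => (G.Adj x y ∧ ¬((x = α ∧ y = v) ∨ (x = v ∧ y = α))) ∨
        ((x = β ∧ y = v) ∨ (x = v ∧ y = β))
      symm := by
        constructor
        intro x y hxy
        rcases hxy with ⟨ha, hn⟩ | hb
        · exact Or.inl ⟨ha.symm, fun hc => hn (hc.symm.imp And.symm And.symm)⟩
        · exact Or.inr (hb.symm.imp And.symm And.symm)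
      loopless := by
        constructor
        intro x hx
        rcases hx with ⟨ha, _⟩ | h1 | h1
        · exact G.loopless.irrefl x ha
        · exact hβv' (h1.1 ▸ h1.2)
        · exact hβv' (h1.2 ▸ h1.1) }
  have hdec' : DecidableRel G'.Adj := fun x y => by
    show Decidable ((G.Adj x y ∧ ¬((x = α ∧ y = v) ∨ (x = v ∧ y = α))) ∨
        ((x = β ∧ y = v) ∨ (x = v ∧ y = β)))
    infer_instance
  refine ⟨G', hdec', fun i => ?_⟩
  have hadjdef : ∀ x y, G'.Adj x y ↔ (G.Adj x y ∧ ¬((x = α ∧ y = v) ∨ (x = v ∧ y = α))) ∨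
      ((x = β ∧ y = v) ∨ (x = v ∧ y = β)) := fun x y => Iff.rfl
  rw [← SimpleGraph.card_neighborFinset_eq_degree]
  by_cases hiα : i = α
  · subst hiα
    have hN : G'.neighborFinset i = (G.neighborFinset i).erase v := by
      ext y
      simp only [SimpleGraph.mem_neighborFinset, Finset.mem_erase, hadjdef]
      constructor
      · rintro (⟨ha, hn⟩ | h1 | h1)
        · exact ⟨fun e => hn (by tauto), ha⟩
        · exact absurd h1.1 hne
        · exact absurd h1.1 (Ne.symm hvα)
      · rintro ⟨hyv, ha⟩
        refine Or.inl ⟨ha, ?_⟩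
        rintro (⟨_, e⟩ | ⟨e, _⟩)
        · exact hyv e
        · exact hvα e.symm
    rw [hN, Finset.card_erase_of_mem ((SimpleGraph.mem_neighborFinset ..).2 hαv)]
    simp [lvl, SimpleGraph.card_neighborFinset_eq_degree, hdeg]
  by_cases hiβ : i = β
  · subst hiβ
    have hN : G'.neighborFinset i = insert v (G.neighborFinset i) := by
      ext y
      simp only [SimpleGraph.mem_neighborFinset, Finset.mem_insert, hadjdef]
      constructor
      · rintro (⟨ha, _⟩ | h1 | h1)
        · exact Or.inr ha
        · exact Or.inl h1.2
        · exact absurd h1.1 hβv'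
      · rintro (rfl | ha)
        · tauto
        · refine Or.inl ⟨ha, ?_⟩
          rintro (⟨e, _⟩ | ⟨e, _⟩)
          · exact hiα e
          · exact hβv' e
    rw [hN, Finset.card_insert_of_notMem (by simpa using hβv)]
    simp [lvl, hiα, SimpleGraph.card_neighborFinset_eq_degree, hdeg]
  by_cases hiv : i = v
  · subst hiv
    have hN : G'.neighborFinset i = insert β ((G.neighborFinset i).erase α) := by
      ext y
      simp only [SimpleGraph.mem_neighborFinset, Finset.mem_insert, Finset.mem_erase, hadjdef]
      constructor
      · rintro (⟨ha, hn⟩ | h1 | h1)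
        · exact Or.inr ⟨fun e => hn (by tauto), ha⟩
        · exact absurd h1.1 hβv'.symm
        · exact Or.inl h1.2
      · rintro (rfl | ⟨hyα, ha⟩)
        · tauto
        · refine Or.inl ⟨ha, ?_⟩
          rintro (⟨e, _⟩ | ⟨_, e⟩)
          · exact hvα e
          · exact hyα e
    have hβnot : β ∉ (G.neighborFinset i).erase α := by
      simp only [Finset.mem_erase, SimpleGraph.mem_neighborFinset]
      rintro ⟨_, hb⟩
      exact hβv hb.symm
    have h1 : 1 ≤ G.degree i := by
      rw [← SimpleGraph.card_neighborFinset_eq_degree]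
      exact Finset.card_pos.2 ⟨α, (SimpleGraph.mem_neighborFinset ..).2 hαv.symm⟩
    rw [hN, Finset.card_insert_of_notMem hβnot,
      Finset.card_erase_of_mem ((SimpleGraph.mem_neighborFinset ..).2 hαv.symm)]
    simp only [lvl, if_neg hiα, if_neg hiβ,
      SimpleGraph.card_neighborFinset_eq_degree, hdeg] at *
    omega
  · have hN : G'.neighborFinset i = G.neighborFinset i := by
      ext y
      simp only [SimpleGraph.mem_neighborFinset, hadjdef]
      constructor
      · rintro (⟨ha, _⟩ | h1 | h1)
        · exact ha
        · exact absurd h1.1 hiβ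
        · exact absurd h1.1 hiv
      · intro ha
        refine Or.inl ⟨ha, ?_⟩
        rintro (⟨e, _⟩ | ⟨e, _⟩)
        · exact hiα e
        · exact hiv e
    rw [hN]
    simp [lvl, hiα, hiβ, SimpleGraph.card_neighborFinset_eq_degree, hdeg]
end

section
/- For any realizable interval sequence S = (A,B), there exists a graphic sequence D realizing S (i.e., A ≤ D ≤ B and D is graphic) that is levelled with respect to S. -/
open Finset

open Finset SimpleGraph

section SwapGraph

variable {V : Type*} [Fintype V] [DecidableEq V]

lemma exists_swap_vertex (G : SimpleGraph V) [DecidableRel G.Adj] {α β : V}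
    (h : G.degree β < G.degree α) :
    ∃ v, G.Adj α v ∧ v ≠ β ∧ ¬ G.Adj β v := by
  by_contra hc
  push_neg at hc
  by_cases hab : G.Adj α β
  · have hsub : G.neighborFinset α \ {β} ⊆ G.neighborFinset β \ {α} := by
      intro v hv
      simp only [mem_sdiff, mem_neighborFinset, mem_singleton] at hv ⊢
      exact ⟨hc v hv.1 hv.2, fun e => (G.ne_of_adj hv.1) e.symm⟩
    have h1 : (G.neighborFinset α \ {β}).card = G.degree α - 1 := by
      rw [Finset.card_sdiff_of_subset (by simpa [mem_neighborFinset] using hab), Finset.card_singleton]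
      rfl
    have h2 : (G.neighborFinset β \ {α}).card = G.degree β - 1 := by
      rw [Finset.card_sdiff_of_subset (by simpa [mem_neighborFinset] using hab.symm), Finset.card_singleton]
      rfl
    have hle := Finset.card_le_card hsub
    rw [h1, h2] at hle
    have hβ1 : 1 ≤ G.degree β := by
      have : α ∈ G.neighborFinset β := by simpa [mem_neighborFinset] using hab.symm
      have := Finset.card_pos.mpr ⟨α, this⟩
      rw [SimpleGraph.degree]
      omega
    omega
  · have hsub : G.neighborFinset α ⊆ G.neighborFinset β := by
      intro v hv
      simp only [mem_neighborFinset] at hv ⊢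
      exact hc v hv (fun e => hab (e ▸ hv))
    have := Finset.card_le_card hsub
    simp only [SimpleGraph.degree] at h
    omega

/-- Swap graph: delete edge `αv`, add edge `βv`. -/
def swapG (G : SimpleGraph V) (α β v : V) (hβv : β ≠ v) : SimpleGraph V where
  Adj x y := (G.Adj x y ∧ ¬(x = α ∧ y = v) ∧ ¬(x = v ∧ y = α)) ∨ (x = β ∧ y = v) ∨ (x = v ∧ y = β)
  symm := by
    constructor
    intro x y h
    have := fun (h : G.Adj x y) => h.symm
    tauto
  loopless := by
    constructor
    rintro x (⟨h, _⟩ | ⟨h1, h2⟩ | ⟨h1, h2⟩)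
    · exact G.loopless.irrefl x h
    · exact absurd (h1.symm.trans h2) hβv
    · exact absurd (h2.symm.trans h1) hβv

lemma swapG_adj (G : SimpleGraph V) (α β v : V) (hβv : β ≠ v) (x y : V) :
    (swapG G α β v hβv).Adj x y ↔
      (G.Adj x y ∧ ¬(x = α ∧ y = v) ∧ ¬(x = v ∧ y = α)) ∨ (x = β ∧ y = v) ∨ (x = v ∧ y = β) :=
  Iff.rfl

lemma swapG_degree (G : SimpleGraph V) [DecidableRel G.Adj] {α β v : V}
    (hαβ : α ≠ β) (hβv : β ≠ v) (hav : G.Adj α v) (hnbv : ¬ G.Adj β v) :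
    ∀ (inst : DecidableRel (swapG G α β v hβv).Adj) (x : V),
      (swapG G α β v hβv).degree x =
        if x = α then G.degree α - 1 else if x = β then G.degree β + 1 else G.degree x := by
  intro inst x
  have hαv : α ≠ v := G.ne_of_adj hav
  have hvα : v ≠ α := fun e => hαv e.symm
  have hvβ : v ≠ β := fun e => hβv e.symm
  have hβα : β ≠ α := fun e => hαβ e.symm
  by_cases hxα : x = α
  · have hN : (swapG G α β v hβv).neighborFinset x = G.neighborFinset x \ {v} := by
      ext y
      rw [mem_neighborFinset, swapG_adj, Finset.mem_sdiff, mem_neighborFinset,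
        Finset.mem_singleton]
      constructor
      · rintro (⟨h1, h2, h3⟩ | ⟨h1, h2⟩ | ⟨h1, h2⟩)
        · exact ⟨h1, fun e => h2 ⟨hxα, e⟩⟩
        · exact absurd (hxα ▸ h1 : α = β) hβα.symm
        · exact absurd (hxα ▸ h1 : α = v) hαv
      · rintro ⟨h1, h2⟩
        exact Or.inl ⟨h1, fun e => h2 e.2, fun e => hαv (hxα.symm.trans e.1)⟩
    have hvmem : v ∈ G.neighborFinset x := by
      rw [mem_neighborFinset, hxα]; exact hav
    rw [SimpleGraph.degree, hN, Finset.card_sdiff_of_subset (Finset.singleton_subset_iff.mpr hvmem),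
      Finset.card_singleton, if_pos hxα, SimpleGraph.degree, hxα]
  · by_cases hxβ : x = β
    · have hN : (swapG G α β v hβv).neighborFinset x = insert v (G.neighborFinset x) := by
        ext y
        rw [mem_neighborFinset, swapG_adj, Finset.mem_insert, mem_neighborFinset]
        constructor
        · rintro (⟨h1, h2, h3⟩ | ⟨h1, h2⟩ | ⟨h1, h2⟩)
          · exact Or.inr h1
          · exact Or.inl h2
          · exact absurd (hxβ ▸ h1 : β = v) hβv
        · rintro (rfl | h1)
          · exact Or.inr (Or.inl ⟨hxβ, rfl⟩)
          · exact Or.inl ⟨h1, fun e => hxα e.1, fun e => hβv (hxβ.symm.trans e.1)⟩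
      have hvnmem : v ∉ G.neighborFinset x := by
        rw [mem_neighborFinset, hxβ]; exact hnbv
      rw [SimpleGraph.degree, hN, Finset.card_insert_of_notMem hvnmem, if_neg hxα,
        if_pos hxβ, SimpleGraph.degree, hxβ]
    · by_cases hxv : x = v
      · have hN : (swapG G α β v hβv).neighborFinset x =
            insert β (G.neighborFinset x \ {α}) := by
          ext y
          rw [mem_neighborFinset, swapG_adj, Finset.mem_insert, Finset.mem_sdiff,
            mem_neighborFinset, Finset.mem_singleton]
          constructor
          · rintro (⟨h1, h2, h3⟩ | ⟨h1, h2⟩ | ⟨h1, h2⟩)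
            · exact Or.inr ⟨h1, fun e => h3 ⟨hxv, e⟩⟩
            · exact absurd (hxv ▸ h1 : v = β) hvβ
            · exact Or.inl h2
          · rintro (rfl | ⟨h1, h2⟩)
            · exact Or.inr (Or.inr ⟨hxv, rfl⟩)
            · exact Or.inl ⟨h1, fun e => hxα e.1, fun e => h2 e.2⟩
        have hαmem : α ∈ G.neighborFinset x := by
          rw [mem_neighborFinset, hxv]; exact hav.symm
        have hβnmem : β ∉ G.neighborFinset x \ {α} := by
          rw [Finset.mem_sdiff, mem_neighborFinset, hxv]
          exact fun h => hnbv h.1.symm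
        rw [SimpleGraph.degree, hN, Finset.card_insert_of_notMem hβnmem,
          Finset.card_sdiff_of_subset (Finset.singleton_subset_iff.mpr hαmem), Finset.card_singleton,
          if_neg hxα, if_neg hxβ, SimpleGraph.degree, hxv]
        have h1d : 1 ≤ (G.neighborFinset v).card :=
          Finset.card_pos.mpr ⟨α, by rw [mem_neighborFinset]; exact hav.symm⟩
        omega
      · have hN : (swapG G α β v hβv).neighborFinset x = G.neighborFinset x := by
          ext y
          rw [mem_neighborFinset, swapG_adj, mem_neighborFinset]
          constructor
          · rintro (⟨h1, h2, h3⟩ | ⟨h1, h2⟩ | ⟨h1, h2⟩)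
            · exact h1
            · exact absurd h1 hxβ
            · exact absurd h1 hxv
          · intro h1
            exact Or.inl ⟨h1, fun e => hxα e.1, fun e => hxv e.1⟩
        rw [SimpleGraph.degree, hN, if_neg hxα, if_neg hxβ]
        rfl

end SwapGraph

lemma lvl_graphic {n : ℕ} {D : Fin n → ℕ} (hD : IsGraphic D) {α β : Fin n}
    (hαβ : α ≠ β) (h : D β < D α) : IsGraphic (lvl D α β) := by
  obtain ⟨G, inst, hdeg⟩ := hD
  have hlt : G.degree β < G.degree α := by rw [hdeg, hdeg]; exact h
  obtain ⟨v, hav, hvβ, hnbv⟩ := exists_swap_vertex G hlt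
  have hβv : β ≠ v := fun e => hvβ e.symm
  refine ⟨swapG G α β v hβv, Classical.decRel _, ?_⟩
  intro i
  rw [swapG_degree G hαβ hβv hav hnbv _ i, lvl]
  have hvα : v ≠ α := fun e => G.ne_of_adj hav e.symm
  by_cases hiα : i = α
  · simp [hiα, hdeg]
  · by_cases hiβ : i = β <;> simp [hiα, hiβ, hdeg]

lemma spread_nonneg {n : ℕ} (D : Fin n → ℕ) : 0 ≤ spread D := by
  refine Finset.sum_nonneg fun r _ => Finset.sum_nonneg fun s _ => ?_
  split
  · exact abs_nonneg _
  · exact le_refl _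

theorem stmt_5_aux {n : ℕ} (A B : Fin n → ℕ)
    (hS : ∀ i, A i ≤ B i ∧ B i ≤ n - 1) (hR : Realizable A B) :
    ∃ D : Fin n → ℕ, IsGraphic D ∧ Between A D B ∧ IsLevelled A B D := by
  set T : Set ℕ := {m | ∃ D, IsGraphic D ∧ Between A D B ∧ (spread D).toNat = m} with hT
  have hTne : T.Nonempty := by
    obtain ⟨D, hg, hb⟩ := hR
    exact ⟨(spread D).toNat, D, hg, hb, rfl⟩
  obtain ⟨D, hg, hb, hm⟩ := Nat.sInf_mem hTne
  refine ⟨D, hg, hb, hb, ?_⟩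
  intro α β hne hlt hbet
  have hg' : IsGraphic (lvl D α β) := lvl_graphic hg hne hlt
  have hle : sInf T ≤ (spread (lvl D α β)).toNat := Nat.sInf_le ⟨lvl D α β, hg', hbet, rfl⟩
  have h1 := spread_nonneg D
  have h2 := spread_nonneg (lvl D α β)
  omega


theorem stmt_5 {n : ℕ} (A B : Fin n → ℕ)
    (hS : ∀ i, A i ≤ B i ∧ B i ≤ n - 1) (hR : Realizable A B) :
    ∃ D : Fin n → ℕ, IsGraphic D ∧ Between A D B ∧ IsLevelled A B D := by
  exact stmt_5_aux A B hS hR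
end

section
/- Let S = (A,B) be an interval sequence, L an integer in [0, Σ_i (b_i − a_i)], and ℓ = min{x : F(x,S) = L} where F(ℓ,S) = Σ_i (min(ℓ,b_i) − min(ℓ,a_i)). Then an integer sequence D with A ≤ D ≤ B is levelled with respect to S and has volume L if and only if: (a) d_i = b_i for every i with b_i ≤ ℓ; (b) d_i = a_i for every i with a_i ≥ ℓ; and (c) among the indices i with a_i < ℓ < b_i, exactly F(ℓ,S) − F(⌊ℓ⌋,S) of them have d_i = ⌈ℓ⌉ and the rest have d_i = ⌊ℓ⌋. -/
open Finset

/-- full double sum version of spread -/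
def spread2 {n : ℕ} (D : Fin n → ℕ) : ℤ :=
  ∑ r : Fin n, ∑ s : Fin n, |(D r : ℤ) - (D s : ℤ)|

lemma spread2_eq {n : ℕ} (D : Fin n → ℕ) : spread2 D = 2 * spread D := by
  have key : ∀ r s : Fin n, |(D r : ℤ) - (D s : ℤ)| =
      (if r < s then |(D r : ℤ) - (D s : ℤ)| else 0) +
      (if s < r then |(D s : ℤ) - (D r : ℤ)| else 0) := by
    intro r s
    rcases lt_trichotomy r s with h | h | h
    · simp [h, not_lt_of_gt h]
    · simp [h]
    · simp [h, not_lt_of_gt h, abs_sub_comm]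
  have : spread2 D = spread D + ∑ r : Fin n, ∑ s : Fin n,
      (if s < r then |(D s : ℤ) - (D r : ℤ)| else 0) := by
    unfold spread2 spread
    rw [← Finset.sum_add_distrib]
    refine Finset.sum_congr rfl fun r _ => ?_
    rw [← Finset.sum_add_distrib]
    exact Finset.sum_congr rfl fun s _ => key r s
  rw [this, Finset.sum_comm]
  unfold spread; ring

lemma spread2_split {n : ℕ} (X : Fin n → ℕ) (α β : Fin n) (hαβ : α ≠ β) :
    spread2 X = 2 * |(X α : ℤ) - X β|
      + 2 * ∑ s ∈ (univ.erase α).erase β, |(X α : ℤ) - X s|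
      + 2 * ∑ s ∈ (univ.erase α).erase β, |(X β : ℤ) - X s|
      + ∑ r ∈ (univ.erase α).erase β, ∑ s ∈ (univ.erase α).erase β, |(X r : ℤ) - X s| := by
  classical
  set U : Finset (Fin n) := (univ.erase α).erase β with hU
  have hβU : β ∈ univ.erase α := Finset.mem_erase.2 ⟨hαβ.symm, Finset.mem_univ β⟩
  have split : ∀ f : Fin n → ℤ, ∑ r : Fin n, f r = f α + f β + ∑ r ∈ U, f r := by
    intro f
    rw [← Finset.add_sum_erase univ f (Finset.mem_univ α),
        ← Finset.add_sum_erase (univ.erase α) f hβU, add_assoc]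
  rw [spread2, split]
  rw [split (fun s => |(X α : ℤ) - X s|), split (fun s => |(X β : ℤ) - X s|)]
  have hrow : ∀ r, ∑ s : Fin n, |(X r : ℤ) - X s| =
      |(X r : ℤ) - X α| + |(X r : ℤ) - X β| + ∑ s ∈ U, |(X r : ℤ) - X s| :=
    fun r => split (fun s => |(X r : ℤ) - X s|)
  rw [Finset.sum_congr rfl (fun r _ => hrow r), Finset.sum_add_distrib,
    Finset.sum_add_distrib]
  have c1 : ∑ r ∈ U, |(X r : ℤ) - X α| = ∑ s ∈ U, |(X α : ℤ) - X s| :=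
    Finset.sum_congr rfl fun r _ => abs_sub_comm _ _
  have c2 : ∑ r ∈ U, |(X r : ℤ) - X β| = ∑ s ∈ U, |(X β : ℤ) - X s| :=
    Finset.sum_congr rfl fun r _ => abs_sub_comm _ _
  rw [c1, c2]
  have : |(X β : ℤ) - X α| = |(X α : ℤ) - X β| := abs_sub_comm _ _
  rw [this]
  ring_nf
  simp [abs_sub_comm]

lemma abs_pair_le {x y c : ℤ} (h : y + 1 ≤ x - 1) :
    |x - 1 - c| + |y + 1 - c| ≤ |x - c| + |y - c| := by
  rcases abs_cases (x - 1 - c) with ⟨e1, _⟩ | ⟨e1, _⟩ <;>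
  rcases abs_cases (y + 1 - c) with ⟨e2, _⟩ | ⟨e2, _⟩ <;>
  rcases abs_cases (x - c) with ⟨e3, _⟩ | ⟨e3, _⟩ <;>
  rcases abs_cases (y - c) with ⟨e4, _⟩ | ⟨e4, _⟩ <;> omega

lemma spread2_lvl_lt {n : ℕ} (D : Fin n → ℕ) (α β : Fin n) (hαβ : α ≠ β)
    (hgap : D β + 2 ≤ D α) : spread2 (lvl D α β) < spread2 D := by
  classical
  set E := lvl D α β with hE
  have hEα : (E α : ℤ) = (D α : ℤ) - 1 := by
    simp only [hE, lvl, if_pos rfl]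
    have : 1 ≤ D α := by omega
    push_cast [Nat.cast_sub this]; ring
  have hEβ : (E β : ℤ) = (D β : ℤ) + 1 := by
    simp only [hE, lvl, if_neg hαβ.symm, if_pos rfl]; push_cast; ring
  have hEs : ∀ s : Fin n, s ∈ (univ.erase α).erase β → (E s : ℤ) = (D s : ℤ) := by
    intro s hs
    rw [Finset.mem_erase, Finset.mem_erase] at hs
    simp [hE, lvl, hs.2.1, hs.1]
  rw [spread2_split E α β hαβ, spread2_split D α β hαβ]
  have hgap' : (D β : ℤ) + 1 ≤ (D α : ℤ) - 1 := by push_cast; omega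
  have h1 : |(E α : ℤ) - E β| < |(D α : ℤ) - D β| := by
    rw [hEα, hEβ]
    rw [abs_of_nonneg (by omega), abs_of_nonneg (by omega)]
    omega
  have h2 : ∑ s ∈ (univ.erase α).erase β, |(E α : ℤ) - E s|
      + ∑ s ∈ (univ.erase α).erase β, |(E β : ℤ) - E s|
      ≤ ∑ s ∈ (univ.erase α).erase β, |(D α : ℤ) - D s|
      + ∑ s ∈ (univ.erase α).erase β, |(D β : ℤ) - D s| := by
    rw [← Finset.sum_add_distrib, ← Finset.sum_add_distrib]
    refine Finset.sum_le_sum fun s hs => ?_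
    rw [hEα, hEβ, hEs s hs]
    have := abs_pair_le (x := (D α : ℤ)) (y := (D β : ℤ)) (c := (D s : ℤ)) hgap'
    linarith
  have h3 : ∑ r ∈ (univ.erase α).erase β, ∑ s ∈ (univ.erase α).erase β, |(E r : ℤ) - E s|
      = ∑ r ∈ (univ.erase α).erase β, ∑ s ∈ (univ.erase α).erase β, |(D r : ℤ) - D s| := by
    refine Finset.sum_congr rfl fun r hr => Finset.sum_congr rfl fun s hs => ?_
    rw [hEs r hr, hEs s hs]
  rw [h3]
  linarith

lemma spread_perm {n : ℕ} (D : Fin n → ℕ) (σ : Equiv.Perm (Fin n)) :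
    spread (fun i => D (σ i)) = spread D := by
  have h2 : spread2 (fun i => D (σ i)) = spread2 D := by
    unfold spread2
    rw [Fintype.sum_equiv σ _ (fun r => ∑ s : Fin n, |(D r : ℤ) - D s|)]
    intro r
    exact Fintype.sum_equiv σ _ _ (fun s => rfl)
  have e1 := spread2_eq D
  have e2 := spread2_eq (fun i => D (σ i))
  omega

lemma lvl_swap_eq {n : ℕ} (D : Fin n → ℕ) (α β : Fin n) (hαβ : α ≠ β)
    (h : D α = D β + 1) : lvl D α β = fun i => D (Equiv.swap α β i) := by
  funext i
  by_cases hiα : i = α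
  · subst hiα; simp [lvl, Equiv.swap_apply_left, h]
  · by_cases hiβ : i = β
    · subst hiβ; simp [lvl, hiα, Equiv.swap_apply_right, h]
    · simp [lvl, hiα, hiβ, Equiv.swap_apply_of_ne_of_ne hiα hiβ]

/-- The key combinatorial characterization of levelled sequences. -/
lemma isLevelled_iff {n : ℕ} (A B D : Fin n → ℕ) :
    IsLevelled A B D ↔ Between A D B ∧
      ∀ i j : Fin n, A i < D i → D j < B j → D i ≤ D j + 1 := by
  constructor
  · rintro ⟨hB, hlev⟩
    refine ⟨hB, fun i j hAi hBj => ?_⟩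
    by_contra hc
    push_neg at hc
    have hgap : D j + 2 ≤ D i := hc
    have hij : i ≠ j := by rintro rfl; omega
    have hbet : Between A (lvl D i j) B := by
      intro x
      by_cases hxi : x = i
      · subst hxi; simp only [lvl, if_pos rfl, if_true]
        exact ⟨by omega, by have := (hB x).2; omega⟩
      · by_cases hxj : x = j
        · subst hxj; simp only [lvl, if_neg hxi, if_pos rfl, if_true]
          exact ⟨by have := (hB x).1; omega, by omega⟩
        · simp only [lvl, if_neg hxi, if_neg hxj]; exact hB x
    have hle := hlev i j hij (by omega) hbet
    have hlt := spread2_lvl_lt D i j hij hgap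
    have e1 := spread2_eq D
    have e2 := spread2_eq (lvl D i j)
    omega
  · rintro ⟨hB, hcond⟩
    refine ⟨hB, fun α β hαβ hlt hbet => ?_⟩
    have h1 : A α < D α := by
      have := (hbet α).1
      simp only [lvl, if_pos rfl, if_true] at this
      omega
    have h2 : D β < B β := by
      have := (hbet β).2
      simp only [lvl, if_neg hαβ.symm, if_pos rfl, if_true] at this
      omega
    have heq : D α = D β + 1 := by
      have := hcond α β h1 h2; omega
    rw [lvl_swap_eq D α β hαβ heq, spread_perm]

section FvolLemmas
variable {n : ℕ} {A B : Fin n → ℕ}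

lemma term_mono (i : Fin n) (hab : A i ≤ B i) {x y : ℝ} (hxy : x ≤ y) :
    min x (B i : ℝ) - min x (A i : ℝ) ≤ min y (B i : ℝ) - min y (A i : ℝ) := by
  have : (A i : ℝ) ≤ (B i : ℝ) := by exact_mod_cast hab
  simp only [min_def]
  split_ifs <;> linarith

lemma Fvol_mono (hab : ∀ i, A i ≤ B i) : Monotone (Fvol A B) := by
  intro x y hxy
  exact Finset.sum_le_sum fun i _ => term_mono i (hab i) hxy

lemma Fvol_cont : Continuous (Fvol A B) := by
  unfold Fvol
  refine continuous_finset_sum _ fun i _ => ?_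
  exact (continuous_id.min continuous_const).sub (continuous_id.min continuous_const)

lemma Fvol_nonpos {x : ℝ} (hx : x ≤ 0) : Fvol A B x = 0 := by
  unfold Fvol
  refine Finset.sum_eq_zero fun i _ => ?_
  rw [min_eq_left (hx.trans (Nat.cast_nonneg _)), min_eq_left (hx.trans (Nat.cast_nonneg _))]
  ring

lemma Fvol_top (hab : ∀ i, A i ≤ B i) (hb : ∀ i, B i ≤ n) :
    Fvol A B (n : ℝ) = (∑ i, (B i - A i) : ℕ) := by
  unfold Fvol
  rw [Nat.cast_sum]
  refine Finset.sum_congr rfl fun i _ => ?_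
  have h1 : (B i : ℝ) ≤ n := by exact_mod_cast hb i
  have h2 : (A i : ℝ) ≤ n := le_trans (by exact_mod_cast hab i) h1
  rw [min_eq_right h1, min_eq_right h2, Nat.cast_sub (hab i)]

/-- the increment lemma: if `Fvol` is constant on `[x,y]` and `[u,v] ⊆ [x,y] ∩ [A i, B i]`,
then `v ≤ u`. -/
lemma incr_le (hab : ∀ i, A i ≤ B i) {x y : ℝ} (hxy : x ≤ y)
    (hF : Fvol A B x = Fvol A B y) (i : Fin n) {u v : ℝ}
    (hu : x ≤ u) (hv : v ≤ y) (huv : u ≤ v) (hau : (A i : ℝ) ≤ u) (hvb : v ≤ (B i : ℝ)) :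
    v ≤ u := by
  classical
  have key : ∀ z : ℝ, Fvol A B z =
      (min z (B i : ℝ) - min z (A i : ℝ)) +
        ∑ j ∈ univ.erase i, (min z (B j : ℝ) - min z (A j : ℝ)) := by
    intro z
    rw [Fvol, ← Finset.add_sum_erase univ _ (Finset.mem_univ i)]
  have hrest : ∑ j ∈ univ.erase i, (min x (B j : ℝ) - min x (A j : ℝ))
      ≤ ∑ j ∈ univ.erase i, (min y (B j : ℝ) - min y (A j : ℝ)) :=
    Finset.sum_le_sum fun j _ => term_mono j (hab j) hxy
  have hterm : min x (B i : ℝ) - min x (A i : ℝ) + (v - u)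
      ≤ min y (B i : ℝ) - min y (A i : ℝ) := by
    have h1 : min u (B i : ℝ) - min u (A i : ℝ) = u - A i := by
      rw [min_eq_left (huv.trans hvb), min_eq_right hau]
    have h2 : min v (B i : ℝ) - min v (A i : ℝ) = v - A i := by
      rw [min_eq_left hvb, min_eq_right (hau.trans huv)]
    have h3 := term_mono i (hab i) hu
    have h4 := term_mono i (hab i) hv
    linarith
  have := key x
  have := key y
  linarith

/-- slope: `F(t+θ) = F(t) + θ·m` where `m = #{i : a i ≤ t < b i}`. -/
lemma Fvol_slope (hab : ∀ i, A i ≤ B i) (t : ℕ) {θ : ℝ} (h0 : 0 ≤ θ) (h1 : θ ≤ 1) :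
    Fvol A B ((t : ℝ) + θ) = Fvol A B t +
      θ * (univ.filter (fun i => A i ≤ t ∧ t < B i)).card := by
  classical
  have key : ∀ i : Fin n,
      min ((t : ℝ) + θ) (B i : ℝ) - min ((t : ℝ) + θ) (A i : ℝ)
        = (min (t : ℝ) (B i : ℝ) - min (t : ℝ) (A i : ℝ))
          + (if A i ≤ t ∧ t < B i then θ else 0) := by
    intro i
    by_cases hb : B i ≤ t
    · have hb' : (B i : ℝ) ≤ t := by exact_mod_cast hb
      have ha' : (A i : ℝ) ≤ t := le_trans (by exact_mod_cast hab i) hb'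
      rw [min_eq_right hb', min_eq_right (hb'.trans (by linarith)),
        min_eq_right (ha'.trans (by linarith)), min_eq_right ha',
        if_neg (by omega)]
      ring
    · by_cases ha : A i ≤ t
      · -- mid case: a ≤ t < b, so t+1 ≤ b
        have hb2 : (t : ℝ) + 1 ≤ B i := by exact_mod_cast Nat.succ_le_of_lt (by omega)
        have ha' : (A i : ℝ) ≤ t := by exact_mod_cast ha
        rw [min_eq_left (by linarith), min_eq_left (by linarith : (t:ℝ) ≤ B i),
          min_eq_right (by linarith), min_eq_right ha', if_pos ⟨ha, by omega⟩]
        ring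
      · -- a ≥ t+1
        have ha2 : (t : ℝ) + 1 ≤ A i := by exact_mod_cast Nat.succ_le_of_lt (by omega)
        have hab' : (A i : ℝ) ≤ B i := by exact_mod_cast hab i
        rw [min_eq_left (by linarith), min_eq_left (by linarith),
          min_eq_left (by linarith), min_eq_left (by linarith), if_neg (by omega)]
        ring
  unfold Fvol
  rw [Finset.sum_congr rfl fun i _ => key i, Finset.sum_add_distrib]
  congr 1
  rw [← Finset.sum_filter, Finset.sum_const, nsmul_eq_mul]
  ring

/-- `F(ℓ) - F(⌊ℓ⌋) = (ℓ - ⌊ℓ⌋)·|I(ℓ)|`. -/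
lemma Fvol_sub_floor (hab : ∀ i, A i ≤ B i) (ℓ : ℝ) :
    Fvol A B ℓ - Fvol A B (⌊ℓ⌋ : ℝ) =
      (ℓ - (⌊ℓ⌋ : ℝ)) * (univ.filter (fun i => (A i : ℝ) < ℓ ∧ ℓ < (B i : ℝ))).card := by
  classical
  have hfl : ((⌊ℓ⌋ : ℝ)) ≤ ℓ := Int.floor_le ℓ
  have key : ∀ i : Fin n,
      (min ℓ (B i : ℝ) - min ℓ (A i : ℝ)) - (min (⌊ℓ⌋ : ℝ) (B i : ℝ) - min (⌊ℓ⌋ : ℝ) (A i : ℝ))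
        = (if (A i : ℝ) < ℓ ∧ ℓ < (B i : ℝ) then ℓ - (⌊ℓ⌋ : ℝ) else 0) := by
    intro i
    by_cases hb : (B i : ℝ) ≤ ℓ
    · have hb2 : ((B i : ℤ) : ℝ) ≤ ℓ := by push_cast; exact_mod_cast hb
      have hbfl : ((B i : ℝ)) ≤ (⌊ℓ⌋ : ℝ) := by
        exact_mod_cast Int.le_floor.2 hb2
      have ha' : (A i : ℝ) ≤ B i := by exact_mod_cast hab i
      rw [min_eq_right hb, min_eq_right (ha'.trans hb),
        min_eq_right hbfl, min_eq_right (ha'.trans hbfl), if_neg (by push_neg; intro; linarith)]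
      ring
    · push_neg at hb
      by_cases ha : ℓ ≤ (A i : ℝ)
      · have ha2 : (⌊ℓ⌋ : ℝ) ≤ A i := hfl.trans ha
        have hb2 : (⌊ℓ⌋ : ℝ) ≤ B i := ha2.trans (by exact_mod_cast hab i)
        rw [min_eq_left hb.le, min_eq_left ha, min_eq_left hb2, min_eq_left ha2,
          if_neg (by push_neg; intro h; linarith)]
        ring
      · push_neg at ha
        have hafl : (A i : ℝ) ≤ (⌊ℓ⌋ : ℝ) := by
          exact_mod_cast Int.le_floor.2 (by exact_mod_cast ha.le)
        have hbfl : (⌊ℓ⌋ : ℝ) ≤ (B i : ℝ) := by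
          have h1 : (⌊ℓ⌋ : ℝ) ≤ B i := hfl.trans hb.le
          exact h1
        rw [min_eq_left hb.le, min_eq_right ha.le, min_eq_left hbfl, min_eq_right hafl,
          if_pos ⟨ha, hb⟩]
        ring
  have : Fvol A B ℓ - Fvol A B (⌊ℓ⌋ : ℝ) = ∑ i,
      (if (A i : ℝ) < ℓ ∧ ℓ < (B i : ℝ) then ℓ - (⌊ℓ⌋ : ℝ) else 0) := by
    unfold Fvol
    rw [← Finset.sum_sub_distrib]
    exact Finset.sum_congr rfl fun i _ => key i
  rw [this, ← Finset.sum_filter, Finset.sum_const, nsmul_eq_mul]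
  ring

/-- Existence and minimality property of `ℓ`. -/
lemma ell_spec (hab : ∀ i, A i ≤ B i) (hb : ∀ i, B i ≤ n) (L : ℕ)
    (hL : L ≤ ∑ i, (B i - A i)) (ℓ : ℝ) (hℓ : ℓ = sInf {x : ℝ | Fvol A B x = L}) :
    0 ≤ ℓ ∧ Fvol A B ℓ = L ∧ ∀ x : ℝ, 0 ≤ x → Fvol A B x = L → ℓ ≤ x := by
  classical
  set S : Set ℝ := {x : ℝ | Fvol A B x = L} with hS
  have hmono := Fvol_mono hab
  have hne : S.Nonempty := by
    have hsub := intermediate_value_Icc (by positivity : (0:ℝ) ≤ n)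
      (Fvol_cont (A := A) (B := B)).continuousOn
    have hmem : (L : ℝ) ∈ Set.Icc (Fvol A B 0) (Fvol A B n) := by
      rw [Fvol_nonpos le_rfl, Fvol_top hab hb]
      exact ⟨Nat.cast_nonneg _, by exact_mod_cast hL⟩
    obtain ⟨x, _, hx⟩ := hsub hmem
    exact ⟨x, hx⟩
  by_cases hL0 : L = 0
  · subst hL0
    have hnb : ¬ BddBelow S := by
      rintro ⟨c, hc⟩
      have hmem : min c 0 - 1 ∈ S := by
        simp only [hS, Set.mem_setOf_eq, Nat.cast_zero]
        exact Fvol_nonpos (by linarith [min_le_right c 0])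
      have := hc hmem
      have := min_le_left c 0
      linarith
    have hℓ0 : ℓ = 0 := by rw [hℓ, Real.sInf_of_not_bddBelow hnb]
    refine ⟨by rw [hℓ0], by rw [hℓ0]; simpa using Fvol_nonpos le_rfl, fun x hx _ => by linarith [hℓ0]⟩
  · have hLpos : 0 < (L : ℝ) := by positivity
    have hpos : ∀ x ∈ S, (0:ℝ) ≤ x := by
      intro x hx
      by_contra hc
      push_neg at hc
      have : Fvol A B x = 0 := Fvol_nonpos hc.le
      rw [hS, Set.mem_setOf_eq] at hx
      rw [this] at hx
      exact absurd hx.symm (by positivity)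
    have hbdd : BddBelow S := ⟨0, fun x hx => hpos x hx⟩
    have hclosed : IsClosed S := isClosed_eq Fvol_cont continuous_const
    have hmem := hclosed.csInf_mem hne hbdd
    refine ⟨?_, ?_, ?_⟩
    · rw [hℓ]; exact le_csInf hne hpos
    · rw [hℓ]; exact hmem
    · intro x _ hx
      rw [hℓ]; exact csInf_le hbdd hx

end FvolLemmas

/-- From the levelled condition, extract the threshold `t`. -/
lemma exists_threshold {n : ℕ} {A B D : Fin n → ℕ}
    (hS : ∀ i, A i ≤ B i ∧ B i ≤ n - 1)
    (hB : Between A D B)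
    (hlev : ∀ i j : Fin n, A i < D i → D j < B j → D i ≤ D j + 1) :
    ∃ t : ℕ,
      (∀ i, B i ≤ t → D i = B i) ∧
      (∀ i, t < A i → D i = A i) ∧
      (∀ i, A i ≤ t → t < B i → D i = t ∨ D i = t + 1) ∧
      ((∃ i, (A i ≤ t ∧ t < B i) ∧ D i = t + 1) → ∃ i, (A i ≤ t ∧ t < B i) ∧ D i = t) := by
  classical
  by_cases hR : ∃ j, D j < B j
  · -- t₀ := minimal raisable value
    obtain ⟨j₁, hj₁⟩ := hR
    set R := univ.filter (fun j => D j < B j) with hRdef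
    have hRne : R.Nonempty := ⟨j₁, by simp [hRdef, hj₁]⟩
    set t := (R.image D).min' (hRne.image D) with ht
    obtain ⟨j₀, hj₀R, hj₀⟩ := Finset.mem_image.1 ((R.image D).min'_mem (hRne.image D))
    have hj₀raise : D j₀ < B j₀ := (Finset.mem_filter.1 hj₀R).2
    have hmin : ∀ j, D j < B j → t ≤ D j := by
      intro j hj
      exact Finset.min'_le _ _ (Finset.mem_image_of_mem D (by simp [hRdef, hj]))
    have hDj₀ : D j₀ = t := hj₀
    -- P1
    have P1 : ∀ i, B i ≤ t → D i = B i := by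
      intro i hi
      rcases Nat.lt_or_ge (D i) (B i) with h | h
      · have := hmin i h; omega
      · exact le_antisymm (hB i).2 h
    -- the "d ≤ t+1 for lowerable" fact
    have hlow : ∀ i, A i < D i → D i ≤ t + 1 := by
      intro i hi
      have := hlev i j₀ hi hj₀raise
      omega
    have P2 : ∀ i, t < A i → D i = A i := by
      intro i hi
      rcases Nat.lt_or_ge (A i) (D i) with h | h
      · have := hlow i h; omega
      · exact le_antisymm h (hB i).1
    have P3 : ∀ i, A i ≤ t → t < B i → D i = t ∨ D i = t + 1 := by
      intro i hai hbi
      have h1 : D i ≤ t + 1 := by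
        rcases Nat.lt_or_ge (A i) (D i) with h | h
        · exact hlow i h
        · have := (hB i).1; omega
      have h2 : t ≤ D i := by
        rcases Nat.lt_or_ge (D i) (B i) with h | h
        · exact hmin i h
        · have := (hB i).2; omega
      omega
    by_cases hall : ∃ i, (A i ≤ t ∧ t < B i) ∧ D i = t
    · exact ⟨t, P1, P2, P3, fun _ => hall⟩
    · by_cases hmid : ∃ i, A i ≤ t ∧ t < B i
      · -- all mid entries are at t+1; shift to t+1
        push_neg at hall
        have hmid1 : ∀ i, A i ≤ t → t < B i → D i = t + 1 := by
          intro i hai hbi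
          rcases P3 i hai hbi with h | h
          · exact absurd h (hall i ⟨hai, hbi⟩)
          · exact h
        refine ⟨t + 1, ?_, ?_, ?_, ?_⟩
        · intro i hi
          rcases Nat.lt_or_ge t (B i) with h | h
          · -- B i = t+1
            have hbi : B i = t + 1 := by omega
            rcases Nat.lt_or_ge t (A i) with h2 | h2
            · -- A i = t+1 = B i
              have := (hB i).1; have := (hB i).2; omega
            · rw [hmid1 i h2 h, hbi]
          · exact P1 i h
        · intro i hi
          exact P2 i (by omega)
        · intro i hai hbi
          rcases Nat.lt_or_ge t (A i) with h2 | h2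
          · -- A i = t+1, raisable since D i could be...
            left
            have hAi : A i = t + 1 := by omega
            rcases Nat.lt_or_ge (A i) (D i) with h3 | h3
            · have := hlow i h3; omega
            · have := (hB i).1; omega
          · left; exact hmid1 i h2 (by omega)
        · rintro ⟨i, ⟨hai, hbi⟩, hDi⟩
          exfalso
          rcases Nat.lt_or_ge t (A i) with h2 | h2
          · have := hlow i (by omega); omega
          · have := hmid1 i h2 (by omega); omega
      · -- no mid entries at all: the condition is vacuous
        push_neg at hmid
        exact ⟨t, P1, P2, P3, fun ⟨i, hi, _⟩ => absurd hi.1 (by have := hmid i; omega)⟩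
  · -- nothing raisable : D = B, take t = n
    push_neg at hR
    have hDB : ∀ i, D i = B i := fun i => le_antisymm (hB i).2 (hR i)
    refine ⟨n, fun i _ => hDB i, fun i hi => ?_, fun i _ hbi => ?_, fun ⟨i, hi, _⟩ => ?_⟩
    · have := (hS i).1; have := (hS i).2; omega
    · have := (hS i).2; omega
    · exact absurd hi.2 (by have := (hS i).2; omega)

section VolLemmas
variable {n : ℕ} {A B D : Fin n → ℕ}

lemma vol_cast (hB : Between A D B) :
    ((vol A D : ℕ) : ℝ) = ∑ i, ((D i : ℝ) - (A i : ℝ)) := by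
  rw [vol, Nat.cast_sum]
  exact Finset.sum_congr rfl fun i _ => by rw [Nat.cast_sub (hB i).1]

/-- volume of a `t`-standard sequence. -/
lemma vol_eq_Fvol_add (hB : Between A D B) (t : ℕ)
    (P1 : ∀ i, B i ≤ t → D i = B i)
    (P2 : ∀ i, t < A i → D i = A i)
    (P3 : ∀ i, A i ≤ t → t < B i → D i = t ∨ D i = t + 1) :
    ((vol A D : ℕ) : ℝ) = Fvol A B t +
      (univ.filter (fun i => (A i ≤ t ∧ t < B i) ∧ D i = t + 1)).card := by
  classical
  have key : ∀ i : Fin n, (D i : ℝ) - (A i : ℝ) =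
      (min (t : ℝ) (B i : ℝ) - min (t : ℝ) (A i : ℝ))
        + (if (A i ≤ t ∧ t < B i) ∧ D i = t + 1 then 1 else 0) := by
    intro i
    by_cases hb : B i ≤ t
    · have hb' : (B i : ℝ) ≤ t := by exact_mod_cast hb
      have ha' : (A i : ℝ) ≤ t := le_trans (by exact_mod_cast (hB i).1.trans (hB i).2) hb'
      rw [P1 i hb, min_eq_right hb', min_eq_right ha', if_neg (by omega)]
      ring
    · by_cases ha : A i ≤ t
      · have ha' : (A i : ℝ) ≤ t := by exact_mod_cast ha
        have hmid : A i ≤ t ∧ t < B i := ⟨ha, by omega⟩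
        have hb2 : (t : ℝ) ≤ B i := by exact_mod_cast Nat.le_of_lt (by omega)
        rw [min_eq_left hb2, min_eq_right ha']
        rcases P3 i ha (by omega) with h | h
        · rw [h, if_neg (by omega)]; ring
        · rw [h, if_pos ⟨hmid, rfl⟩]; push_cast; ring
      · have ha2 : (t : ℝ) ≤ A i := by exact_mod_cast Nat.le_of_lt (by omega)
        have hab : (A i : ℝ) ≤ B i := by
          exact_mod_cast (hB i).1.trans (hB i).2
        rw [P2 i (by omega), min_eq_left (ha2.trans hab), min_eq_left ha2, if_neg (by omega)]
        ring
  rw [vol_cast hB, Finset.sum_congr rfl fun i _ => key i, Finset.sum_add_distrib]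
  unfold Fvol
  congr 1
  rw [← Finset.sum_filter, Finset.sum_const, nsmul_eq_mul]
  ring

end VolLemmas

section Backward
variable {n : ℕ} {A B D : Fin n → ℕ}
lemma backward_main (hab : ∀ i, A i ≤ B i) (ℓ : ℝ)
    (h1 : ∀ i, (B i : ℝ) ≤ ℓ → D i = B i)
    (h2 : ∀ i, ℓ ≤ (A i : ℝ) → D i = A i)
    (T : Finset (Fin n)) (hT1 : ∀ i ∈ T, (A i : ℝ) < ℓ ∧ ℓ < (B i : ℝ))
    (hTcard : (T.card : ℝ) = Fvol A B ℓ - Fvol A B (⌊ℓ⌋ : ℝ))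
    (hT2 : ∀ i ∈ T, (D i : ℤ) = ⌈ℓ⌉)
    (hT3 : ∀ i, (A i : ℝ) < ℓ → ℓ < (B i : ℝ) → i ∉ T → (D i : ℤ) = ⌊ℓ⌋) :
    Between A D B ∧ (∀ i j : Fin n, A i < D i → D j < B j → D i ≤ D j + 1) ∧
      ((vol A D : ℕ) : ℝ) = Fvol A B ℓ := by
  classical
  have hfl : ((⌊ℓ⌋ : ℝ)) ≤ ℓ := Int.floor_le ℓ
  have hcl : ℓ ≤ ((⌈ℓ⌉ : ℝ)) := Int.le_ceil ℓ
  -- coordinatewise description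
  have hcases : ∀ i : Fin n,
      (¬ (A i : ℝ) < ℓ ∧ D i = A i) ∨ (¬ ℓ < (B i : ℝ) ∧ D i = B i) ∨
      ((A i : ℝ) < ℓ ∧ ℓ < (B i : ℝ) ∧
        ((i ∈ T ∧ (D i : ℤ) = ⌈ℓ⌉) ∨ (i ∉ T ∧ (D i : ℤ) = ⌊ℓ⌋))) := by
    intro i
    by_cases ha : (A i : ℝ) < ℓ
    · by_cases hb : ℓ < (B i : ℝ)
      · right; right
        refine ⟨ha, hb, ?_⟩
        by_cases hT : i ∈ T
        · exact Or.inl ⟨hT, hT2 i hT⟩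
        · exact Or.inr ⟨hT, hT3 i ha hb hT⟩
      · right; left; exact ⟨hb, h1 i (not_lt.1 hb)⟩
    · left; exact ⟨ha, h2 i (not_lt.1 ha)⟩
  have hbet : Between A D B := by
    intro i
    rcases hcases i with ⟨_, hD⟩ | ⟨_, hD⟩ | ⟨ha, hb, hD⟩
    · rw [hD]; exact ⟨le_rfl, hab i⟩
    · rw [hD]; exact ⟨hab i, le_rfl⟩
    · have hA : (A i : ℤ) ≤ ⌊ℓ⌋ := Int.le_floor.2 (by exact_mod_cast ha.le)
      have hBc : ⌈ℓ⌉ ≤ (B i : ℤ) := Int.ceil_le.2 (by exact_mod_cast hb.le)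
      have hfc : (⌊ℓ⌋ : ℤ) ≤ ⌈ℓ⌉ := Int.floor_le_ceil ℓ
      rcases hD with ⟨_, hD⟩ | ⟨_, hD⟩
      · have e1 : (A i : ℤ) ≤ (D i : ℤ) := by rw [hD]; exact hA.trans hfc
        have e2 : (D i : ℤ) ≤ (B i : ℤ) := by rw [hD]; exact hBc
        exact ⟨by exact_mod_cast e1, by exact_mod_cast e2⟩
      · have e1 : (A i : ℤ) ≤ (D i : ℤ) := by rw [hD]; exact hA
        have e2 : (D i : ℤ) ≤ (B i : ℤ) := by rw [hD]; exact hfc.trans hBc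
        exact ⟨by exact_mod_cast e1, by exact_mod_cast e2⟩
  -- the levelling bound
  have hlevcond : ∀ i j : Fin n, A i < D i → D j < B j → D i ≤ D j + 1 := by
    have low : ∀ i, A i < D i → ((D i : ℤ)) ≤ ⌈ℓ⌉ := by
      intro i hi
      rcases hcases i with ⟨_, hD⟩ | ⟨hb', hD⟩ | ⟨ha, hb, hD⟩
      · omega
      · rw [hD]
        have : ((B i : ℤ) : ℝ) ≤ ((⌈ℓ⌉ : ℤ) : ℝ) := by
          push_cast
          exact le_trans (not_lt.1 hb') hcl
        exact_mod_cast this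
      · rcases hD with ⟨_, hD⟩ | ⟨_, hD⟩
        · rw [hD]
        · rw [hD]; exact Int.floor_le_ceil ℓ
    have high : ∀ j, D j < B j → (⌊ℓ⌋ : ℤ) ≤ (D j : ℤ) := by
      intro j hj
      rcases hcases j with ⟨ha', hD⟩ | ⟨_, hD⟩ | ⟨ha, hb, hD⟩
      · rw [hD]
        have h := Int.floor_le_floor (R := ℝ) (not_lt.1 ha')
        rwa [Int.floor_natCast] at h
      · omega
      · rcases hD with ⟨_, hD⟩ | ⟨_, hD⟩
        · rw [hD]; exact Int.floor_le_ceil ℓ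
        · rw [hD]
    intro i j hi hj
    have h1 := low i hi
    have h2 := high j hj
    have h3 := Int.ceil_le_floor_add_one ℓ
    omega
  refine ⟨hbet, hlevcond, ?_⟩
  -- the volume computation
  set Is := univ.filter (fun i => (A i : ℝ) < ℓ ∧ ℓ < (B i : ℝ)) with hIs
  have hTsub : T ⊆ Is := fun i hi => by
    simp only [hIs, Finset.mem_filter]
    exact ⟨Finset.mem_univ i, hT1 i hi⟩
  have key : ∀ i : Fin n, (D i : ℝ) - (A i : ℝ) =
      (min ℓ (B i : ℝ) - min ℓ (A i : ℝ))
        + ((if i ∈ T then ((⌈ℓ⌉ : ℝ) - ℓ) else 0)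
          + (if i ∈ Is \ T then ((⌊ℓ⌋ : ℝ) - ℓ) else 0)) := by
    intro i
    rcases hcases i with ⟨ha', hD⟩ | ⟨hb', hD⟩ | ⟨ha, hb, hD⟩
    · -- ℓ ≤ A i
      have ha2 : ℓ ≤ (A i : ℝ) := not_lt.1 ha'
      have hnotT : i ∉ T := fun h => absurd (hT1 i h).1 ha'
      have hnotI : i ∉ Is := by simp [hIs]; intro h; exact absurd h ha'
      rw [hD, min_eq_left (ha2.trans (by exact_mod_cast hab i)), min_eq_left ha2,
        if_neg hnotT, if_neg (fun h => hnotI (Finset.mem_sdiff.1 h).1)]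
      ring
    · -- B i ≤ ℓ
      have hb2 : (B i : ℝ) ≤ ℓ := not_lt.1 hb'
      have hnotT : i ∉ T := fun h => absurd (hT1 i h).2 hb'
      have hnotI : i ∉ Is := by
        simp only [hIs, Finset.mem_filter, Finset.mem_univ, true_and]
        rintro ⟨_, h⟩; exact hb' h
      rw [hD, min_eq_right hb2, min_eq_right ((by exact_mod_cast hab i : (A i:ℝ) ≤ B i).trans hb2),
        if_neg hnotT, if_neg (fun h => hnotI (Finset.mem_sdiff.1 h).1)]
      ring
    · have hIm : i ∈ Is := by simp [hIs, ha, hb]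
      rw [min_eq_left hb.le, min_eq_right ha.le]
      rcases hD with ⟨hT, hD⟩ | ⟨hT, hD⟩
      · have : (D i : ℝ) = ((⌈ℓ⌉ : ℝ)) := by exact_mod_cast congrArg (Int.cast : ℤ → ℝ) hD
        rw [this, if_pos hT, if_neg (fun h => (Finset.mem_sdiff.1 h).2 hT)]
        ring
      · have : (D i : ℝ) = ((⌊ℓ⌋ : ℝ)) := by exact_mod_cast congrArg (Int.cast : ℤ → ℝ) hD
        rw [this, if_neg hT, if_pos (Finset.mem_sdiff.2 ⟨hIm, hT⟩)]
        ring
  rw [vol_cast hbet, Finset.sum_congr rfl fun i _ => key i, Finset.sum_add_distrib]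
  have hsum2 : ∑ i : Fin n, ((if i ∈ T then ((⌈ℓ⌉ : ℝ) - ℓ) else 0)
      + (if i ∈ Is \ T then ((⌊ℓ⌋ : ℝ) - ℓ) else 0)) = 0 := by
    rw [Finset.sum_add_distrib, Finset.sum_ite_mem, Finset.sum_ite_mem,
      Finset.univ_inter, Finset.univ_inter, Finset.sum_const, Finset.sum_const,
      Finset.card_sdiff_of_subset hTsub, nsmul_eq_mul, nsmul_eq_mul]
    have hcard : ((Is.card - T.card : ℕ) : ℝ) = (Is.card : ℝ) - T.card := by
      rw [Nat.cast_sub (Finset.card_le_card hTsub)]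
    rw [hcard]
    have hTc : (T.card : ℝ) = (ℓ - (⌊ℓ⌋ : ℝ)) * Is.card := by
      rw [hTcard, Fvol_sub_floor hab ℓ]
    by_cases hint : (⌊ℓ⌋ : ℝ) = ℓ
    · have : (T.card : ℝ) = 0 := by rw [hTc, hint]; ring
      rw [this, hint]; ring
    · have hlt : (⌊ℓ⌋ : ℝ) < ℓ := lt_of_le_of_ne hfl hint
      have hceil : ((⌈ℓ⌉ : ℝ)) = (⌊ℓ⌋ : ℝ) + 1 := by
        have h1 : ⌈ℓ⌉ ≤ ⌊ℓ⌋ + 1 := Int.ceil_le_floor_add_one ℓ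
        have h2 : ⌊ℓ⌋ < ⌈ℓ⌉ := by
          have : (⌊ℓ⌋ : ℝ) < (⌈ℓ⌉ : ℝ) := lt_of_lt_of_le hlt hcl
          exact_mod_cast this
        have : ⌈ℓ⌉ = ⌊ℓ⌋ + 1 := le_antisymm h1 h2
        exact_mod_cast congrArg (Int.cast : ℤ → ℝ) this
      rw [hceil, hTc]
      ring
  rw [hsum2, add_zero]
  rfl

end Backward

set_option maxHeartbeats 1000000 in
theorem stmt_7 {n : ℕ} (A B : Fin n → ℕ)
    (hS : ∀ i, A i ≤ B i ∧ B i ≤ n - 1)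
    (L : ℕ) (hL : L ≤ ∑ i, (B i - A i))
    (ℓ : ℝ) (hℓ : ℓ = sInf {x : ℝ | Fvol A B x = L})
    (D : Fin n → ℕ) :
    (IsLevelled A B D ∧ vol A D = L) ↔
      ((∀ i, (B i : ℝ) ≤ ℓ → D i = B i) ∧
       (∀ i, ℓ ≤ (A i : ℝ) → D i = A i) ∧
       ∃ T : Finset (Fin n),
         (∀ i ∈ T, (A i : ℝ) < ℓ ∧ ℓ < (B i : ℝ)) ∧
         (T.card : ℝ) = Fvol A B ℓ - Fvol A B (⌊ℓ⌋ : ℝ) ∧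
         (∀ i ∈ T, (D i : ℤ) = ⌈ℓ⌉) ∧
         (∀ i, (A i : ℝ) < ℓ → ℓ < (B i : ℝ) → i ∉ T → (D i : ℤ) = ⌊ℓ⌋)) := by
  have hab : ∀ i, A i ≤ B i := fun i => (hS i).1
  have hb_n : ∀ i, B i ≤ n := fun i => (hS i).2.trans (Nat.sub_le n 1)
  obtain ⟨hℓ0, hFℓ, hℓmin⟩ := ell_spec hab hb_n L hL ℓ hℓ
  constructor
  · rintro ⟨hlev, hvol⟩
    rw [isLevelled_iff] at hlev
    obtain ⟨hbet, hcond⟩ := hlev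
    obtain ⟨t, P1, P2, P3, P4⟩ := exists_threshold hS hbet hcond
    set T := univ.filter (fun i => (A i ≤ t ∧ t < B i) ∧ D i = t + 1) with hTdef
    set M := univ.filter (fun i => A i ≤ t ∧ t < B i) with hMdef
    have hvolF : (L : ℝ) = Fvol A B t + T.card := by
      rw [← hvol]; exact vol_eq_Fvol_add hbet t P1 P2 P3
    have hTM : T ⊆ M := by
      intro i hi
      simp only [hTdef, hMdef, Finset.mem_filter, Finset.mem_univ, true_and] at hi ⊢
      exact hi.1
    by_cases hk : T.card = 0
    · -- k = 0 : `ℓ ≤ t` and `Fvol` is constant on `[ℓ, t]`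
      have hTe : T = ∅ := Finset.card_eq_zero.1 hk
      have hnotT1 : ∀ i, A i ≤ t → t < B i → D i = t := by
        intro i hai hbi
        rcases P3 i hai hbi with h | h
        · exact h
        · exfalso
          have : i ∈ T := by
            simp only [hTdef, Finset.mem_filter, Finset.mem_univ, true_and]
            exact ⟨⟨hai, hbi⟩, h⟩
          rw [hTe] at this
          exact absurd this (Finset.notMem_empty i)
      have hFt : Fvol A B t = L := by rw [hvolF, hk]; push_cast; ring
      have hℓt : ℓ ≤ (t : ℝ) := hℓmin t (Nat.cast_nonneg t) hFt
      have hconst : Fvol A B ℓ = Fvol A B t := by rw [hFℓ, hFt]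
      refine ⟨?_, ?_, ∅, ?_, ?_, ?_, ?_⟩
      · -- (a)
        intro i hi
        exact P1 i (by exact_mod_cast hi.trans hℓt)
      · -- (b)
        intro i hi
        rcases Nat.lt_or_ge t (A i) with h1 | h1
        · exact P2 i h1
        · rcases Nat.lt_or_ge (A i) (B i) with h2 | h2
          · rcases Nat.lt_or_ge (A i) t with h3 | h3
            · exfalso
              have hv : min ((B i : ℝ)) (t : ℝ) ≤ (A i : ℝ) := by
                refine incr_le hab hℓt hconst i hi (min_le_right _ _) ?_ le_rfl (min_le_left _ _)
                exact le_min (by exact_mod_cast h2.le) (by exact_mod_cast h3.le)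
              have hv1 : (A i : ℝ) + 1 ≤ (B i : ℝ) := by exact_mod_cast h2
              have hv2 : (A i : ℝ) + 1 ≤ (t : ℝ) := by exact_mod_cast h3
              rcases min_cases ((B i : ℝ)) ((t : ℝ)) with ⟨he, _⟩ | ⟨he, _⟩ <;> rw [he] at hv <;> linarith
            · -- A i = t, mid entry
              have hAt : A i = t := le_antisymm h1 h3
              have := hnotT1 i h1 (by omega)
              omega
          · have := (hbet i).1; have := (hbet i).2; omega
      · -- T membership (empty)
        intro i hi; exact absurd hi (Finset.notMem_empty i)
      · -- card equation
        by_cases hteq : ℓ = (t : ℝ)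
        · have : ((⌊ℓ⌋ : ℝ)) = ℓ := by rw [hteq]; simp
          rw [this]
          simp
        · have hℓlt : ℓ < (t : ℝ) := lt_of_le_of_ne hℓt hteq
          have hIe : ∀ i : Fin n, ¬((A i : ℝ) < ℓ ∧ ℓ < (B i : ℝ)) := by
            rintro i ⟨ha, hb⟩
            have hv : min ((B i : ℝ)) (t : ℝ) ≤ ℓ := by
              refine incr_le hab hℓt hconst i le_rfl (min_le_right _ _) ?_ ha.le (min_le_left _ _)
              exact le_min hb.le hℓt
            rcases min_cases ((B i : ℝ)) ((t : ℝ)) with ⟨he, _⟩ | ⟨he, _⟩ <;> rw [he] at hv <;> linarith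
          have := Fvol_sub_floor (A := A) (B := B) hab ℓ
          have hIf : (univ.filter (fun i => (A i : ℝ) < ℓ ∧ ℓ < (B i : ℝ))) = ∅ :=
            Finset.filter_eq_empty_iff.2 (fun {i} _ => hIe i)
          rw [hIf] at this
          simp only [Finset.card_empty, Nat.cast_zero, mul_zero] at this
          rw [Finset.card_empty, Nat.cast_zero, this]
      · intro i hi; exact absurd hi (Finset.notMem_empty i)
      · -- complement values
        intro i ha hb _
        by_cases hteq : ℓ = (t : ℝ)
        · have hai : A i ≤ t := by
            have : (A i : ℝ) < (t : ℝ) := by rw [← hteq]; exact ha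
            exact_mod_cast this.le
          have hbi : t < B i := by
            have : (t : ℝ) < (B i : ℝ) := by rw [← hteq]; exact hb
            exact_mod_cast this
          have hD := hnotT1 i hai hbi
          have : ((⌊ℓ⌋ : ℤ)) = (t : ℤ) := by rw [hteq, Int.floor_natCast]
          rw [this, hD]
        · exfalso
          have hℓlt : ℓ < (t : ℝ) := lt_of_le_of_ne hℓt hteq
          have hv : min ((B i : ℝ)) (t : ℝ) ≤ ℓ := by
            refine incr_le hab hℓt hconst i le_rfl (min_le_right _ _) ?_ ha.le (min_le_left _ _)
            exact le_min hb.le hℓt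
          rcases min_cases ((B i : ℝ)) ((t : ℝ)) with ⟨he, _⟩ | ⟨he, _⟩ <;> rw [he] at hv <;> linarith
    · -- 0 < k < m
      have hkpos : 0 < T.card := Nat.pos_of_ne_zero hk
      obtain ⟨j, hj⟩ := Finset.card_pos.1 hkpos
      have hjP : (A j ≤ t ∧ t < B j) ∧ D j = t + 1 := by
        simpa only [hTdef, Finset.mem_filter, Finset.mem_univ, true_and] using hj
      obtain ⟨i0, hi0mid, hi0D⟩ := P4 ⟨j, hjP⟩
      have hi0M : i0 ∈ M := by
        simp only [hMdef, Finset.mem_filter, Finset.mem_univ, true_and]; exact hi0mid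
      have hi0T : i0 ∉ T := by
        simp only [hTdef, Finset.mem_filter, Finset.mem_univ, true_and]
        rintro ⟨_, h⟩; omega
      have hkm : T.card < M.card :=
        Finset.card_lt_card ⟨hTM, fun hsub => hi0T (hsub hi0M)⟩
      set m : ℕ := M.card with hm
      set k : ℕ := T.card with hkk
      have hmpos : (0 : ℝ) < m := by exact_mod_cast Nat.pos_of_ne_zero (by omega)
      set θ : ℝ := (k : ℝ) / m with hθ
      have hθpos : 0 < θ := by positivity
      have hθlt : θ < 1 := by
        rw [hθ, div_lt_one hmpos]
        exact_mod_cast hkm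
      have hslope := Fvol_slope hab t hθpos.le hθlt.le
      rw [← hMdef, ← hm] at hslope
      have hFs : Fvol A B ((t : ℝ) + θ) = (L : ℝ) := by
        rw [hslope, hvolF, hθ]
        field_simp
      set s : ℝ := (t : ℝ) + θ with hs
      have hℓle : ℓ ≤ s := hℓmin s (by positivity) hFs
      have hsle : s ≤ ℓ := by
        by_contra hc
        push_neg at hc
        have hFℓlt : Fvol A B ℓ < (L : ℝ) := by
          rcases le_or_gt ℓ (t : ℝ) with h1 | h1
          · have := Fvol_mono hab h1
            have hFt : Fvol A B t = (L : ℝ) - k := by rw [hvolF]; ring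
            have : Fvol A B ℓ ≤ (L : ℝ) - k := by rw [← hFt]; exact this
            have : (0:ℝ) < k := by exact_mod_cast hkpos
            linarith
          · have hθ' : ℓ = (t : ℝ) + (ℓ - t) := by ring
            have he := Fvol_slope hab t (θ := ℓ - (t:ℝ)) (by linarith) (by
              have : s ≤ (t:ℝ) + 1 := by rw [hs]; linarith
              linarith)
            rw [← hMdef, ← hm] at he
            rw [show (t:ℝ) + (ℓ - (t:ℝ)) = ℓ by ring] at he
            rw [he, hvolF]
            have : (ℓ - (t:ℝ)) * m < θ * m := by
              apply mul_lt_mul_of_pos_right _ hmpos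
              rw [hs] at hc; linarith
            have hθm : θ * m = (k : ℝ) := by rw [hθ]; field_simp
            linarith
        rw [hFℓ] at hFℓlt
        exact lt_irrefl _ hFℓlt
      have hℓs : ℓ = s := le_antisymm hℓle hsle
      have htℓ : (t : ℝ) < ℓ := by rw [hℓs, hs]; linarith
      have hℓt1 : ℓ < (t : ℝ) + 1 := by rw [hℓs, hs]; linarith
      have hfloor : ⌊ℓ⌋ = (t : ℤ) := by
        rw [Int.floor_eq_iff]
        constructor
        · push_cast; linarith
        · push_cast; linarith
      have hceil : ⌈ℓ⌉ = (t : ℤ) + 1 := by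
        rw [Int.ceil_eq_iff]
        constructor
        · push_cast; linarith
        · push_cast; linarith
      refine ⟨?_, ?_, T, ?_, ?_, ?_, ?_⟩
      · intro i hi
        refine P1 i ?_
        have : (B i : ℝ) < (t : ℝ) + 1 := lt_of_le_of_lt hi hℓt1
        exact_mod_cast Nat.lt_succ_iff.1 (by exact_mod_cast this)
      · intro i hi
        refine P2 i ?_
        have : (t : ℝ) < (A i : ℝ) := lt_of_lt_of_le htℓ hi
        exact_mod_cast this
      · intro i hi
        have hiP : (A i ≤ t ∧ t < B i) ∧ D i = t + 1 := by
          simpa only [hTdef, Finset.mem_filter, Finset.mem_univ, true_and] using hi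
        constructor
        · have : (A i : ℝ) ≤ (t : ℝ) := by exact_mod_cast hiP.1.1
          linarith
        · have : (t : ℝ) + 1 ≤ (B i : ℝ) := by exact_mod_cast hiP.1.2
          linarith
      · have : ((⌊ℓ⌋ : ℝ)) = (t : ℝ) := by rw [hfloor]; push_cast; ring
        rw [this, show Fvol A B ℓ = Fvol A B s by rw [hℓs], hs, hslope]
        have hθm : θ * m = (k : ℝ) := by rw [hθ]; field_simp
        rw [hθm]
        ring
      · intro i hi
        have hiP : (A i ≤ t ∧ t < B i) ∧ D i = t + 1 := by
          simpa only [hTdef, Finset.mem_filter, Finset.mem_univ, true_and] using hi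
        rw [hceil, hiP.2]
        push_cast; ring
      · intro i ha hb hiT
        have hai : A i ≤ t := by
          have : (A i : ℝ) < (t : ℝ) + 1 := lt_trans ha hℓt1
          exact_mod_cast Nat.lt_succ_iff.1 (by exact_mod_cast this)
        have hbi : t < B i := by
          have : (t : ℝ) < (B i : ℝ) := lt_trans htℓ hb
          exact_mod_cast this
        rcases P3 i hai hbi with h | h
        · rw [hfloor, h]
        · exfalso
          exact hiT (by
            simp only [hTdef, Finset.mem_filter, Finset.mem_univ, true_and]
            exact ⟨⟨hai, hbi⟩, h⟩)
  · rintro ⟨h1, h2, T, hT1, hTcard, hT2, hT3⟩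
    obtain ⟨hbet, hcond, hvolℓ⟩ := backward_main hab ℓ h1 h2 T hT1 hTcard hT2 hT3
    refine ⟨(isLevelled_iff A B D).2 ⟨hbet, hcond⟩, ?_⟩
    have : ((vol A D : ℕ) : ℝ) = (L : ℝ) := by rw [hvolℓ, hFℓ]
    exact_mod_cast this
end

section
/- For any interval sequence S = (A,B), min over all graphic sequences D of δ(D,S) equals min over all graphic sequences D with D ≥ A of δ_U(D,S), where δ_U(D,S) = Σ_i max(0, d_i − b_i), δ_L(D,S) = Σ_i max(0, a_i − d_i), and δ(D,S) = δ_U(D,S) + δ_L(D,S). -/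
open Finset

/-- Add edge i j to G. -/
def addEdge {n : ℕ} (G : SimpleGraph (Fin n)) (i j : Fin n) : SimpleGraph (Fin n) where
  Adj u v := u ≠ v ∧ (G.Adj u v ∨ (u = i ∧ v = j) ∨ (u = j ∧ v = i))
  symm := by
    constructor; intro u v ⟨h1, h2⟩
    refine ⟨h1.symm, ?_⟩
    rcases h2 with h | ⟨rfl, rfl⟩ | ⟨rfl, rfl⟩
    · exact Or.inl (G.adj_symm h)
    · exact Or.inr (Or.inr ⟨rfl, rfl⟩)
    · exact Or.inr (Or.inl ⟨rfl, rfl⟩)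
  loopless := ⟨fun v h => h.1 rfl⟩

instance {n : ℕ} (G : SimpleGraph (Fin n)) [DecidableRel G.Adj] (i j : Fin n) :
    DecidableRel (addEdge G i j).Adj := fun u v => by
  unfold addEdge; simp only; infer_instance

lemma addEdge_adj {n : ℕ} (G : SimpleGraph (Fin n)) (i j u v : Fin n) :
    (addEdge G i j).Adj u v ↔ u ≠ v ∧ (G.Adj u v ∨ (u = i ∧ v = j) ∨ (u = j ∧ v = i)) :=
  Iff.rfl

lemma addEdge_degree_i {n : ℕ} (G : SimpleGraph (Fin n)) [DecidableRel G.Adj] {i j : Fin n}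
    (hij : i ≠ j) (hna : ¬ G.Adj i j) :
    (addEdge G i j).degree i = G.degree i + 1 := by
  have : (addEdge G i j).neighborFinset i = insert j (G.neighborFinset i) := by
    ext v
    rw [SimpleGraph.mem_neighborFinset, mem_insert, SimpleGraph.mem_neighborFinset, addEdge_adj]
    constructor
    · rintro ⟨h1, h | ⟨-, rfl⟩ | ⟨rfl, rfl⟩⟩
      · exact Or.inr h
      · exact Or.inl rfl
      · exact absurd rfl hij
    · rintro (rfl | h)
      · exact ⟨hij, Or.inr (Or.inl ⟨rfl, rfl⟩)⟩
      · exact ⟨G.ne_of_adj h, Or.inl h⟩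
  rw [SimpleGraph.degree, this, card_insert_of_notMem (by simpa using hna),
    SimpleGraph.degree]

lemma addEdge_degree_j {n : ℕ} (G : SimpleGraph (Fin n)) [DecidableRel G.Adj] {i j : Fin n}
    (hij : i ≠ j) (hna : ¬ G.Adj i j) :
    (addEdge G i j).degree j = G.degree j + 1 := by
  have : (addEdge G i j).neighborFinset j = insert i (G.neighborFinset j) := by
    ext v
    rw [SimpleGraph.mem_neighborFinset, mem_insert, SimpleGraph.mem_neighborFinset, addEdge_adj]
    constructor
    · rintro ⟨h1, h | ⟨rfl, rfl⟩ | ⟨-, rfl⟩⟩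
      · exact Or.inr h
      · exact absurd rfl hij
      · exact Or.inl rfl
    · rintro (rfl | h)
      · exact ⟨hij.symm, Or.inr (Or.inr ⟨rfl, rfl⟩)⟩
      · exact ⟨G.ne_of_adj h, Or.inl h⟩
  rw [SimpleGraph.degree, this,
    card_insert_of_notMem (by simp [G.adj_comm] at hna ⊢; exact hna),
    SimpleGraph.degree]

lemma addEdge_degree_other {n : ℕ} (G : SimpleGraph (Fin n)) [DecidableRel G.Adj] {i j k : Fin n}
    (hki : k ≠ i) (hkj : k ≠ j) :
    (addEdge G i j).degree k = G.degree k := by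
  have : (addEdge G i j).neighborFinset k = G.neighborFinset k := by
    ext v
    rw [SimpleGraph.mem_neighborFinset, SimpleGraph.mem_neighborFinset, addEdge_adj]
    constructor
    · rintro ⟨h1, h | ⟨rfl, rfl⟩ | ⟨rfl, rfl⟩⟩
      · exact h
      · exact absurd rfl hki
      · exact absurd rfl hkj
    · intro h; exact ⟨G.ne_of_adj h, Or.inl h⟩
  rw [SimpleGraph.degree, this, SimpleGraph.degree]

lemma exists_nonadj {n : ℕ} (G : SimpleGraph (Fin n)) [DecidableRel G.Adj] {i : Fin n}
    (h : G.degree i < n - 1) : ∃ j, j ≠ i ∧ ¬ G.Adj i j := by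
  by_contra hc
  push_neg at hc
  have hsub : univ.erase i ⊆ G.neighborFinset i := by
    intro j hj
    rw [SimpleGraph.mem_neighborFinset]
    exact hc j (mem_erase.mp hj).1
  have := card_le_card hsub
  rw [card_erase_of_mem (mem_univ i), card_univ, Fintype.card_fin] at this
  exact absurd (lt_of_le_of_lt this h) (lt_irrefl _)

/-- Key lemma: from any graphic D we can reach graphic D' ≥ A with small devU. -/
lemma key_devU {n : ℕ} (A B : Fin n → ℕ) (hS : ∀ i, A i ≤ B i ∧ B i ≤ n - 1) :
    ∀ m (D : Fin n → ℕ), devL D A = m → IsGraphic D →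
    ∃ D', IsGraphic D' ∧ (∀ i, A i ≤ D' i) ∧ devU D' B ≤ devU D B + devL D A := by
  intro m
  induction m using Nat.strong_induction_on with
  | _ m ih =>
    intro D hm hD
    by_cases h0 : ∀ i, A i ≤ D i
    · exact ⟨D, hD, h0, Nat.le_add_right _ _⟩
    push_neg at h0
    obtain ⟨i, hi⟩ := h0
    obtain ⟨G, hdec, hGD⟩ := hD
    have hdegi : G.degree i < n - 1 := by
      rw [hGD i]; exact lt_of_lt_of_le hi (le_trans (hS i).1 (hS i).2)
    obtain ⟨j, hji, hna⟩ := exists_nonadj G hdegi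
    set D' : Fin n → ℕ := fun k => if k = i ∨ k = j then D k + 1 else D k with hD'
    have hD'i : D' i = D i + 1 := by simp [hD']
    have hD'j : D' j = D j + 1 := by simp [hD']
    have hD'k : ∀ k, k ≠ i → k ≠ j → D' k = D k := by
      intro k h1 h2; simp [hD', h1, h2]
    have hD'graphic : IsGraphic D' := by
      refine ⟨addEdge G i j, inferInstance, fun k => ?_⟩
      by_cases h1 : k = i
      · rw [h1, addEdge_degree_i G (Ne.symm hji) hna, hGD, hD'i]
      by_cases h2 : k = j
      · rw [h2, addEdge_degree_j G (Ne.symm hji) hna, hGD, hD'j]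
      · rw [addEdge_degree_other G h1 h2, hGD, hD'k k h1 h2]
    have hptL : ∀ k ∈ univ, (A k - D' k) + (if k = i then 1 else 0) ≤ A k - D k := by
      intro k _
      by_cases h1 : k = i
      · rw [if_pos h1, h1, hD'i]; omega
      by_cases h2 : k = j
      · have hk : D' k = D k + 1 := by rw [h2]; exact hD'j
        rw [hk, if_neg h1]; omega
      · rw [hD'k k h1 h2, if_neg h1]; omega
    have hdevL : devL D' A + 1 ≤ devL D A := by
      have h1 : ∑ k, ((A k - D' k) + (if k = i then 1 else 0)) ≤ ∑ k, (A k - D k) :=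
        Finset.sum_le_sum hptL
      rw [Finset.sum_add_distrib, Finset.sum_ite_eq' univ i (fun _ => 1)] at h1
      simpa [devL] using h1
    have hptU : ∀ k ∈ univ, D' k - B k ≤ (D k - B k) + (if k = j then 1 else 0) := by
      intro k _
      by_cases h2 : k = j
      · have hk : D' k = D k + 1 := by rw [h2]; exact hD'j
        rw [hk, if_pos h2]; omega
      by_cases h1 : k = i
      · have hA := (hS k).1
        rw [if_neg h2, h1, hD'i]
        rw [h1] at hA
        omega
      · rw [hD'k k h1 h2, if_neg h2]; omega
    have hdevU : devU D' B ≤ devU D B + 1 := by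
      have h1 : ∑ k, (D' k - B k) ≤ ∑ k, ((D k - B k) + (if k = j then 1 else 0)) :=
        Finset.sum_le_sum hptU
      rw [Finset.sum_add_distrib, Finset.sum_ite_eq' univ j (fun _ => 1)] at h1
      simpa [devU] using h1
    obtain ⟨D'', hg, hge, hle⟩ := ih (devL D' A) (by omega) D' rfl hD'graphic
    exact ⟨D'', hg, hge, by omega⟩

theorem stmt_12 {n : ℕ} (A B : Fin n → ℕ)
    (hS : ∀ i, A i ≤ B i ∧ B i ≤ n - 1) :
    sInf {v : ℕ | ∃ D : Fin n → ℕ, IsGraphic D ∧ v = devU D B + devL D A} =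
    sInf {v : ℕ | ∃ D : Fin n → ℕ, IsGraphic D ∧ (∀ i, A i ≤ D i) ∧ v = devU D B} := by
  have hzero : IsGraphic (fun _ : Fin n => 0) :=
    ⟨⊥, inferInstance, fun i => SimpleGraph.bot_degree i⟩
  have hL : {v : ℕ | ∃ D : Fin n → ℕ, IsGraphic D ∧ v = devU D B + devL D A}.Nonempty :=
    ⟨_, ⟨_, hzero, rfl⟩⟩
  have hR : {v : ℕ | ∃ D : Fin n → ℕ, IsGraphic D ∧ (∀ i, A i ≤ D i) ∧ v = devU D B}.Nonempty := by
    obtain ⟨D', hg, hge, _⟩ := key_devU A B hS _ (fun _ => 0) rfl hzero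
    exact ⟨_, ⟨D', hg, hge, rfl⟩⟩
  apply le_antisymm
  · obtain ⟨D, hg, hge, hv⟩ := Nat.sInf_mem hR
    apply Nat.sInf_le
    refine ⟨D, hg, ?_⟩
    have h0 : devL D A = 0 := by
      unfold devL
      apply Finset.sum_eq_zero
      intro k _
      exact Nat.sub_eq_zero_of_le (hge k)
    rw [hv, h0]
    rfl
  · obtain ⟨D, hg, hv⟩ := Nat.sInf_mem hL
    obtain ⟨D', hg', hge', hle'⟩ := key_devU A B hS _ D rfl hg
    rw [hv]
    have hmem : devU D' B ∈
        {v : ℕ | ∃ D : Fin n → ℕ, IsGraphic D ∧ (∀ i, A i ≤ D i) ∧ v = devU D B} :=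
      ⟨D', hg', hge', rfl⟩
    exact le_trans (Nat.sInf_le hmem) hle'
end
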